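/- (In the actual experiment the all-office strategy has strictly higher expected utility than the canteen-before-9 strategy.) Let kmin = 0, kmax = 6 and N = 5 (arrival times 8:10 am through 9:10 am in 10-minute steps, with 9:00 am corresponding to 5), and let u be uniform with values A = log(0.99), B = 2·log(0.99), C = 2·log(0.01), where log is the natural logarithm (these are the experiment's per-round utilities for canteen coordination, office coordination, and miscoordination or a forbidden canteen choice, at certainty estimate 0.99; note A > B > C). Then the all-office profile has strictly greater expected utility over T than the cut-off profile with cut-off 5; explicitly, 2·log(0.99) > (10·log(0.99) + 4·log(0.01))/12. -/

import Mathlib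

/-- The two actions: `c` (canteen) and `o` (office). -/
inductive Act : Type
  | c : Act
  | o : Act
deriving DecidableEq

open Act

/-- The set of arrival pairs
`T = {(k, k+1) : kmin ≤ k ≤ kmax - 1} ∪ {(k, k-1) : kmin + 1 ≤ k ≤ kmax}`. -/
noncomputable def T (kmin kmax : ℤ) : Finset (ℤ × ℤ) :=
  ((Finset.Icc kmin (kmax - 1)).image (fun k => (k, k + 1))) ∪
  ((Finset.Icc (kmin + 1) kmax).image (fun k => (k, k - 1)))

/-- Subgame `T1 = {(t1,t2) ∈ T : t1 ≡ kmin (mod 2)}`. -/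
noncomputable def T1 (kmin kmax : ℤ) : Finset (ℤ × ℤ) :=
  (T kmin kmax).filter (fun t => t.1 % 2 = kmin % 2)

/-- Subgame `T2 = {(t1,t2) ∈ T : t2 ≡ kmin (mod 2)}`. -/
noncomputable def T2 (kmin kmax : ℤ) : Finset (ℤ × ℤ) :=
  (T kmin kmax).filter (fun t => t.2 % 2 = kmin % 2)

/-- The expected utility of profile `s` over a set `S` of arrival pairs:
`EU_S(s) = (1/|S|) · Σ_{(t1,t2) ∈ S} u_{(t1,t2)}(s_1(t1), s_2(t2))`. -/
noncomputable def EU (u : ℤ × ℤ → Act → Act → ℝ) (s : (ℤ → Act) × (ℤ → Act))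
    (S : Finset (ℤ × ℤ)) : ℝ :=
  (∑ t ∈ S, u t (s.1 t.1) (s.2 t.2)) / S.card

/-- `s` is Pareto optimal over `S` if no profile `s'` has `EU_S(s') > EU_S(s)`. -/
def ParetoOptimal (u : ℤ × ℤ → Act → Act → ℝ) (S : Finset (ℤ × ℤ))
    (s : (ℤ → Act) × (ℤ → Act)) : Prop :=
  ¬ ∃ s' : (ℤ → Act) × (ℤ → Act), EU u s' S > EU u s S

/-- `u` satisfies conditions (U1) and (U2) on the arrival pairs of `T`. -/
def SatisfiesU1U2 (kmin kmax N : ℤ) (u : ℤ × ℤ → Act → Act → ℝ) : Prop :=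
  ∀ t ∈ T kmin kmax,
    (t.1 < N ∧ t.2 < N →
      u t c c > u t o o ∧ u t o o > u t c o ∧ u t c o = u t o c) ∧
    (N ≤ t.1 ∨ N ≤ t.2 →
      u t o o > u t c o ∧ u t c o = u t o c ∧ u t o c = u t c c)

/-- `u` is uniform with values `A > B > C` (the order is assumed separately). -/
def Uniform (kmin kmax N : ℤ) (u : ℤ × ℤ → Act → Act → ℝ) (A B C : ℝ) : Prop :=
  ∀ t ∈ T kmin kmax,
    (t.1 < N ∧ t.2 < N →
      u t c c = A ∧ u t o o = B ∧ u t c o = C ∧ u t o c = C) ∧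
    (N ≤ t.1 ∨ N ≤ t.2 →
      u t o o = B ∧ u t c c = C ∧ u t c o = C ∧ u t o c = C)

/-- The cut-off strategy with cut-off `m`: canteen iff arriving strictly before `m`. -/
def cutoff (m : ℤ) : ℤ → Act := fun k => if k < m then c else o

/-- The all-office strategy. -/
def allOffice : ℤ → Act := fun _ => o

set_option maxHeartbeats 1000000 in
/-- In the actual experiment (`kmin = 0`, `kmax = 6`, `N = 5`, uniform
utility with values `A = log 0.99 > B = 2·log 0.99 > C = 2·log 0.01`), the all-office
profile has strictly greater expected utility over `T` than the cut-off profile with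
cut-off 5; explicitly, `2·log 0.99 > (10·log 0.99 + 4·log 0.01)/12`. -/
theorem stmt_13 (u : ℤ × ℤ → Act → Act → ℝ)
    (hu : Uniform 0 6 5 u (Real.log 0.99) (2 * Real.log 0.99) (2 * Real.log 0.01)) :
    EU u (allOffice, allOffice) (T 0 6) > EU u (cutoff 5, cutoff 5) (T 0 6) ∧
    2 * Real.log 0.99 > (10 * Real.log 0.99 + 4 * Real.log 0.01) / 12 := by
  have hT : T 0 6 = ({(0,1),(1,2),(2,3),(3,4),(4,5),(5,6),(1,0),(2,1),(3,2),(4,3),(5,4),(6,5)} : Finset (ℤ×ℤ)) := by decide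
  have key : Real.log 0.01 < 3 * Real.log 0.99 := by
    have h : Real.log ((0.01:ℝ)^(1:ℕ)) < Real.log ((0.99:ℝ)^(3:ℕ)) :=
      Real.log_lt_log (by norm_num) (by norm_num)
    rw [Real.log_pow, Real.log_pow] at h
    push_cast at h
    linarith
  constructor
  · have h01 := hu (0,1) (by decide)
    have h12 := hu (1,2) (by decide)
    have h23 := hu (2,3) (by decide)
    have h34 := hu (3,4) (by decide)
    have h45 := hu (4,5) (by decide)
    have h56 := hu (5,6) (by decide)
    have h10 := hu (1,0) (by decide)
    have h21 := hu (2,1) (by decide)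
    have h32 := hu (3,2) (by decide)
    have h43 := hu (4,3) (by decide)
    have h54 := hu (5,4) (by decide)
    have h65 := hu (6,5) (by decide)
    have a01 := h01.1 (by norm_num)
    have a12 := h12.1 (by norm_num)
    have a23 := h23.1 (by norm_num)
    have a34 := h34.1 (by norm_num)
    have a10 := h10.1 (by norm_num)
    have a21 := h21.1 (by norm_num)
    have a32 := h32.1 (by norm_num)
    have a43 := h43.1 (by norm_num)
    have b45 := h45.2 (by norm_num)
    have b56 := h56.2 (by norm_num)
    have b54 := h54.2 (by norm_num)
    have b65 := h65.2 (by norm_num)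
    rw [EU, EU, hT]
    repeat rw [Finset.sum_insert (by decide)]
    rw [Finset.sum_singleton, Finset.sum_singleton]
    rw [show (({(0,1),(1,2),(2,3),(3,4),(4,5),(5,6),(1,0),(2,1),(3,2),(4,3),(5,4),(6,5)} : Finset (ℤ×ℤ))).card = 12 from by decide]
    simp only [allOffice, cutoff]
    norm_num
    rw [div_lt_div_iff₀ (by norm_num) (by norm_num)]
    obtain ⟨A01, B01, C01, D01⟩ := a01
    obtain ⟨A12, B12, C12, D12⟩ := a12
    obtain ⟨A23, B23, C23, D23⟩ := a23
    obtain ⟨A34, B34, C34, D34⟩ := a34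
    obtain ⟨A10, B10, C10, D10⟩ := a10
    obtain ⟨A21, B21, C21, D21⟩ := a21
    obtain ⟨A32, B32, C32, D32⟩ := a32
    obtain ⟨A43, B43, C43, D43⟩ := a43
    obtain ⟨E45, F45, G45, H45⟩ := b45
    obtain ⟨E56, F56, G56, H56⟩ := b56
    obtain ⟨E54, F54, G54, H54⟩ := b54
    obtain ⟨E65, F65, G65, H65⟩ := b65
    linarith [key]
  · have h : Real.log ((0.01:ℝ)^(4:ℕ)) < Real.log ((0.99:ℝ)^(14:ℕ)) :=
      Real.log_lt_log (by norm_num) (by norm_num)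
    rw [Real.log_pow, Real.log_pow] at h
    push_cast at h
    linarith
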